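/- Assume that every 1×1 and every 2×2 complex matrix satisfies the Crouzeix inequality. Let A be an n×n complex matrix with A² = 0. Then A satisfies the Crouzeix inequality. -/

import Mathlib

open scoped ComplexInnerProductSpace

set_option maxHeartbeats 1000000
set_option synthInstance.maxHeartbeats 400000

/-- The continuous linear map on Euclidean space induced by a square matrix. -/
noncomputable def matCLM {ι : Type} [Fintype ι] [DecidableEq ι] (A : Matrix ι ι ℂ) :
    EuclideanSpace ℂ ι →L[ℂ] EuclideanSpace ℂ ι :=
  Matrix.toEuclideanCLM (𝕜 := ℂ) A

/-- The numerical range of a square complex matrix. -/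
def numRange {ι : Type} [Fintype ι] [DecidableEq ι] (A : Matrix ι ι ℂ) : Set ℂ :=
  {z | ∃ x : EuclideanSpace ℂ ι, ‖x‖ = 1 ∧ z = ⟪x, matCLM A x⟫}

/-- A square complex matrix satisfies the Crouzeix inequality if for every polynomial `p`,
`‖p(A)‖ ≤ 2 * sup_{z ∈ W(A)} |p(z)|`. -/
def CrouzeixIneq {ι : Type} [Fintype ι] [DecidableEq ι] (A : Matrix ι ι ℂ) : Prop :=
  ∀ p : Polynomial ℂ,
    ‖matCLM (Polynomial.aeval A p)‖ ≤ 2 * ⨆ z ∈ numRange A, ‖Polynomial.eval z p‖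

/-! ### Auxiliary lemmas -/

lemma matCLM_apply {ι : Type} [Fintype ι] [DecidableEq ι] (A : Matrix ι ι ℂ)
    (x : EuclideanSpace ℂ ι) (i : ι) : matCLM A x i = A.mulVec x i := rfl

/-- The phase of a complex number. -/
noncomputable def phs (z : ℂ) : ℂ := if z = 0 then 1 else z / ‖z‖

lemma phs_abs (z : ℂ) : ‖phs z‖ = 1 := by
  unfold phs
  split_ifs with h
  · simp
  · rw [norm_div, Complex.norm_real, norm_norm]
    field_simp [(norm_ne_zero_iff.mpr h)]

lemma mul_conj_phs (z : ℂ) : z * starRingEnd ℂ (phs z) = ‖z‖ := by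
  unfold phs
  split_ifs with h
  · simp [h]
  · have hz : (‖z‖ : ℂ) ≠ 0 := by
      simpa using (norm_ne_zero_iff.mpr h)
    rw [map_div₀, Complex.conj_ofReal, mul_div_assoc', Complex.mul_conj, ← Complex.sq_norm]
    push_cast
    rw [sq, mul_div_assoc, div_self hz, mul_one]

lemma abs_mul_phs (z : ℂ) : (‖z‖ : ℂ) * phs z = z := by
  unfold phs
  split_ifs with h
  · simp [h]
  · field_simp [(norm_ne_zero_iff.mpr h)]

open Polynomial in
theorem aeval_sq_zero {S : Type*} [Ring S] [Algebra ℂ S] (a : S) (ha : a ^ 2 = 0) (p : ℂ[X]) :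
    aeval a p = algebraMap ℂ S (p.coeff 0) + p.coeff 1 • a := by
  conv_lhs => rw [← p.divX_mul_X_add, ← (p.divX).divX_mul_X_add]
  simp only [map_add, map_mul, map_pow, aeval_X, aeval_C, add_mul, smul_mul_assoc, one_mul,
    mul_assoc, ← pow_two, ha, mul_zero, zero_add, Algebra.algebraMap_eq_smul_one, coeff_divX]
  abel

theorem matCLM_aeval {n : ℕ} (A : Matrix (Fin n) (Fin n) ℂ) (hA : A ^ 2 = 0) (p : Polynomial ℂ) :
    matCLM (Polynomial.aeval A p) = p.coeff 0 • 1 + p.coeff 1 • matCLM A := by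
  rw [aeval_sq_zero A hA p]
  simp [matCLM, map_add, map_smul, Algebra.algebraMap_eq_smul_one]

theorem sq_zero_B (a : ℝ) : (!![0, (a:ℂ); 0, 0]) ^ 2 = 0 := by
  rw [sq]
  ext i j
  fin_cases i <;> fin_cases j <;> simp [Matrix.mul_apply, Fin.sum_univ_two]

theorem numRange_eq_image {n : ℕ} (A : Matrix (Fin n) (Fin n) ℂ) :
    numRange A = (fun x : EuclideanSpace ℂ (Fin n) => (⟪x, matCLM A x⟫ : ℂ)) ''
      Metric.sphere 0 1 := by
  ext z
  simp only [numRange, Set.mem_setOf_eq, Set.mem_image, mem_sphere_zero_iff_norm]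
  exact ⟨fun ⟨x, h1, h2⟩ => ⟨x, h1, h2.symm⟩, fun ⟨x, h1, h2⟩ => ⟨x, h1, h2.symm⟩⟩

theorem numRange_compact {n : ℕ} (A : Matrix (Fin n) (Fin n) ℂ) : IsCompact (numRange A) := by
  rw [numRange_eq_image]
  exact (isCompact_sphere 0 1).image (continuous_id.inner (matCLM A).continuous)

theorem sup_facts {n : ℕ} (A : Matrix (Fin n) (Fin n) ℂ) (p : Polynomial ℂ) :
    0 ≤ (⨆ z ∈ numRange A, ‖Polynomial.eval z p‖) ∧
    ∀ z ∈ numRange A, ‖Polynomial.eval z p‖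
      ≤ ⨆ z ∈ numRange A, ‖Polynomial.eval z p‖ := by
  have hbdd : BddAbove ((fun z => ‖Polynomial.eval z p‖) '' numRange A) :=
    ((numRange_compact A).image (continuous_norm.comp p.continuous)).bddAbove
  obtain ⟨C, hC⟩ := hbdd
  have hrange : BddAbove (Set.range fun z => ⨆ _ : z ∈ numRange A,
      ‖Polynomial.eval z p‖) := by
    refine ⟨max C 0, ?_⟩
    rintro _ ⟨z, rfl⟩
    show (⨆ _ : z ∈ numRange A, ‖Polynomial.eval z p‖) ≤ max C 0
    by_cases hz : z ∈ numRange A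
    · rw [ciSup_pos (f := fun _ => ‖Polynomial.eval z p‖) hz]
      exact le_max_of_le_left (hC (Set.mem_image_of_mem _ hz))
    · haveI : IsEmpty (z ∈ numRange A) := ⟨hz⟩
      rw [Real.iSup_of_isEmpty]
      exact le_max_right _ _
  constructor
  · apply Real.iSup_nonneg
    intro z
    apply Real.iSup_nonneg
    intro _
    exact norm_nonneg _
  · intro z hz
    calc ‖Polynomial.eval z p‖
        = ⨆ _ : z ∈ numRange A, ‖Polynomial.eval z p‖ :=
          (ciSup_pos (f := fun _ => ‖Polynomial.eval z p‖) hz).symm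
    _ ≤ _ := le_ciSup hrange z

/-- A maximizing vector for the operator norm. -/
theorem exists_max_vec {n : ℕ} (T : EuclideanSpace ℂ (Fin n) →L[ℂ] EuclideanSpace ℂ (Fin n))
    (hT : T ≠ 0) : ∃ e : EuclideanSpace ℂ (Fin n), ‖e‖ = 1 ∧ ‖T e‖ = ‖T‖ := by
  have : Nontrivial (EuclideanSpace ℂ (Fin n)) := by
    obtain ⟨x, hx⟩ : ∃ x, T x ≠ 0 := by
      by_contra h; push_neg at h; exact hT (by ext x; simp [h])
    exact nontrivial_of_ne x 0 (fun h => hx (by simp [h]))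
  have hne : (Metric.sphere (0 : EuclideanSpace ℂ (Fin n)) 1).Nonempty :=
    NormedSpace.sphere_nonempty.mpr zero_le_one
  obtain ⟨e, heS, hmax⟩ := (isCompact_sphere (0 : EuclideanSpace ℂ (Fin n)) 1).exists_isMaxOn hne
    (T.continuous.norm.continuousOn)
  rw [mem_sphere_zero_iff_norm] at heS
  refine ⟨e, heS, le_antisymm (by simpa [heS] using T.le_opNorm e) ?_⟩
  refine T.opNorm_le_bound (norm_nonneg _) fun x => ?_
  rcases eq_or_ne x 0 with rfl | hx
  · simp
  · have h1 : ‖x‖⁻¹ • x ∈ Metric.sphere (0 : EuclideanSpace ℂ (Fin n)) 1 := by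
      simp [norm_smul, norm_ne_zero_iff.mpr hx, inv_mul_cancel₀ (norm_ne_zero_iff.mpr hx)]
    have := hmax h1
    have h2 : ‖T (‖x‖⁻¹ • x)‖ ≤ ‖T e‖ := this
    rw [T.map_smul_of_tower, norm_smul, norm_inv, norm_norm] at h2
    have hx' : (0:ℝ) < ‖x‖ := norm_pos_iff.mpr hx
    calc ‖T x‖ = ‖x‖ * (‖x‖⁻¹ * ‖T x‖) := by field_simp
    _ ≤ ‖x‖ * ‖T e‖ := by gcongr
    _ = ‖T e‖ * ‖x‖ := mul_comm _ _

/-- A norm-attaining vector of a square-zero operator is orthogonal to its image. -/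
theorem inner_max_vec_eq_zero {n : ℕ}
    (T : EuclideanSpace ℂ (Fin n) →L[ℂ] EuclideanSpace ℂ (Fin n))
    (hT2 : ∀ y, T (T y) = 0) (e : EuclideanSpace ℂ (Fin n)) (he : ‖e‖ = 1)
    (a : ℝ) (ha : 0 < a) (hTe : ‖T e‖ = a) (hTn : ‖T‖ = a) : ⟪e, T e⟫ = 0 := by
  set c₀ : ℂ := ⟪e, T e⟫ with hc₀
  set r : ℝ := Complex.normSq c₀ with hr
  set t : ℂ := -(starRingEnd ℂ c₀) / ((a:ℂ)^2) with ht
  have key : ∀ s : ℂ, (1:ℝ) ≤ ‖e + s • T e‖^2 := by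
    intro s
    have h1 : ‖T (e + s • T e)‖ = a := by
      rw [map_add, map_smul, hT2, smul_zero, add_zero, hTe]
    have h2 := T.le_opNorm (e + s • T e)
    rw [hTn, h1] at h2
    have h3 : 1 ≤ ‖e + s • T e‖ := by
      by_contra h; push_neg at h
      nlinarith [norm_nonneg (e + s • T e)]
    nlinarith
  have expand : ∀ s : ℂ, ‖e + s • T e‖^2
      = 1 + 2 * (s * c₀).re + ‖s‖^2 * a^2 := by
    intro s
    have hi : ⟪e, s • T e⟫ = s * c₀ := inner_smul_right _ _ _
    rw [@norm_add_sq ℂ, hi, norm_smul, he, hTe]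
    simp [RCLike.re_to_complex]
    ring
  have h4 := key t
  rw [expand t] at h4
  have hre : (t * c₀).re = -(r / a^2) := by
    have : t * c₀ = ((-(r / a^2) : ℝ) : ℂ) := by
      rw [ht, div_mul_eq_mul_div, neg_mul, mul_comm, Complex.mul_conj]
      push_cast
      ring
    rw [this, Complex.ofReal_re]
  have habs2 : ‖t‖ ^ 2 = r / a^4 := by
    rw [ht, norm_div, norm_neg, Complex.norm_conj, div_pow, Complex.sq_norm,
      norm_pow, Complex.norm_real, Real.norm_eq_abs, abs_of_pos ha]
    ring
  rw [hre, habs2] at h4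
  have ha2 : (0:ℝ) < a^2 := by positivity
  have ha4 : (0:ℝ) < a^4 := by positivity
  have hrle : r ≤ 0 := by
    have e1 : r / a ^ 4 * a ^ 2 = r / a^2 := by field_simp
    rw [e1] at h4
    by_contra hc; push_neg at hc
    have := div_pos hc ha2
    linarith
  have : r = 0 := le_antisymm hrle (Complex.normSq_nonneg _)
  exact Complex.normSq_eq_zero.mp this

/-- Decomposition of a unit vector along the kernel of a square-zero operator. -/
theorem decomp {n : ℕ} (T : EuclideanSpace ℂ (Fin n) →L[ℂ] EuclideanSpace ℂ (Fin n))
    (hT2 : ∀ y, T (T y) = 0) (x : EuclideanSpace ℂ (Fin n)) (hx : ‖x‖ = 1) :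
    ∃ un vn : ℝ, 0 ≤ un ∧ 0 ≤ vn ∧ un^2 + vn^2 = 1 ∧ ‖T x‖ ≤ ‖T‖ * vn ∧
      ‖⟪x, T x⟫‖ ≤ un * ‖T x‖ := by
  set K := LinearMap.ker (T : EuclideanSpace ℂ (Fin n) →ₗ[ℂ] EuclideanSpace ℂ (Fin n)) with hK
  set u : EuclideanSpace ℂ (Fin n) := (K.orthogonalProjectionOnto x : EuclideanSpace ℂ (Fin n)) with hu
  set v : EuclideanSpace ℂ (Fin n) := x - u with hv
  have huK : u ∈ K := (K.orthogonalProjectionOnto x).2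
  have hvK : v ∈ Kᗮ := K.sub_starProjection_mem_orthogonal x
  have hinner_uv : ⟪u, v⟫ = 0 := Submodule.inner_right_of_mem_orthogonal huK hvK
  have hxuv : x = u + v := by rw [hv]; abel
  have hpyth : ‖u‖^2 + ‖v‖^2 = 1 := by
    have := @norm_add_sq ℂ _ _ _ _ u v
    rw [← hxuv, hx, hinner_uv] at this
    simp at this
    linarith
  have hTu : T u = 0 := huK
  have hTx : T x = T v := by rw [hxuv, map_add, hTu, zero_add]
  have hTxK : T x ∈ K := hT2 x
  refine ⟨‖u‖, ‖v‖, norm_nonneg _, norm_nonneg _, hpyth, ?_, ?_⟩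
  · rw [hTx]; exact T.le_opNorm v
  · set w := T x with hw
    have h1 : ⟪x, w⟫ = ⟪u, w⟫ := by
      rw [hxuv, inner_add_left]
      rw [Submodule.inner_left_of_mem_orthogonal hTxK hvK, add_zero]
    rw [h1]
    calc ‖⟪u, w⟫‖ = ‖(⟪u, w⟫ : ℂ)‖ := rfl
    _ ≤ ‖u‖ * ‖w‖ := norm_inner_le_norm _ _

/-- Pointwise comparison with the canonical `2 × 2` nilpotent. -/
lemma norm_apply_le {n : ℕ} (T : EuclideanSpace ℂ (Fin n) →L[ℂ] EuclideanSpace ℂ (Fin n))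
    (hT2 : ∀ y, T (T y) = 0) (a : ℝ) (ha : 0 < a) (hTn : ‖T‖ = a) (c d : ℂ)
    (x : EuclideanSpace ℂ (Fin n)) (hx : ‖x‖ = 1) :
    ‖(c • (1 : EuclideanSpace ℂ (Fin n) →L[ℂ] EuclideanSpace ℂ (Fin n)) + d • T) x‖
      ≤ ‖c • (1 : EuclideanSpace ℂ (Fin 2) →L[ℂ] EuclideanSpace ℂ (Fin 2))
          + d • matCLM !![0,(a:ℂ);0,0]‖ := by
  obtain ⟨un, vn, hun, hvn, hpyth, hTle, hinn⟩ := decomp T hT2 x hx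
  set s := ‖T x‖ with hs
  have hs0 : 0 ≤ s := norm_nonneg _
  have hsa : s ≤ a := by
    have h := T.le_opNorm x
    rw [hx, mul_one, hTn] at h
    exact h
  set v₀ : ℝ := s / a with hv₀def
  set u₀ : ℝ := Real.sqrt (1 - v₀^2) with hu₀def
  have hv₀0 : 0 ≤ v₀ := div_nonneg hs0 ha.le
  have hv₀1 : v₀ ≤ 1 := (div_le_one ha).mpr hsa
  have hu₀sq : u₀^2 = 1 - v₀^2 := Real.sq_sqrt (by nlinarith)
  have hu₀0 : 0 ≤ u₀ := Real.sqrt_nonneg _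
  have hav₀ : a * v₀ = s := by rw [hv₀def]; field_simp
  have hvnv₀ : v₀ ≤ vn := by
    rw [hv₀def, div_le_iff₀ ha]
    rw [hTn] at hTle; linarith [hTle]
  have hunu₀ : un ≤ u₀ := by nlinarith
  -- LHS bound
  have happ : (c • (1 : EuclideanSpace ℂ (Fin n) →L[ℂ] EuclideanSpace ℂ (Fin n)) + d • T) x
      = c • x + d • T x := by
    simp
  have hL : ‖(c • (1 : EuclideanSpace ℂ (Fin n) →L[ℂ] EuclideanSpace ℂ (Fin n)) + d • T) x‖^2
      ≤ ‖c‖^2 + 2 * ‖c‖ * ‖d‖ * u₀ * s + ‖d‖^2 * s^2 := by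
    rw [happ, @norm_add_sq ℂ]
    have hi : ⟪c • x, d • T x⟫ = starRingEnd ℂ c * d * ⟪x, T x⟫ := by
      rw [inner_smul_left, inner_smul_right]; ring
    have hre : RCLike.re ⟪c • x, d • T x⟫ ≤ ‖c‖ * ‖d‖ * (un * s) := by
      rw [hi]
      calc (starRingEnd ℂ c * d * ⟪x, T x⟫).re ≤ ‖starRingEnd ℂ c * d * ⟪x, T x⟫‖ :=
        Complex.re_le_norm _
      _ = ‖c‖ * ‖d‖ * ‖⟪x, T x⟫‖ := by
          simp [norm_mul, Complex.norm_conj]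
      _ ≤ ‖c‖ * ‖d‖ * (un * s) :=
          mul_le_mul_of_nonneg_left hinn (by positivity)
    have h1 : ‖c • x‖ = ‖c‖ := by
      rw [norm_smul, hx, mul_one]
    have h2 : ‖d • T x‖ = ‖d‖ * s := by
      rw [norm_smul, hs]
    rw [h1, h2]
    have habsc : 0 ≤ ‖c‖ := norm_nonneg c
    have habsd : 0 ≤ ‖d‖ := norm_nonneg d
    nlinarith [mul_le_mul_of_nonneg_left hunu₀ (mul_nonneg (mul_nonneg habsc habsd) hs0)]
  -- RHS vector
  set w : ℂ := starRingEnd ℂ (phs c) * phs d with hw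
  set y : EuclideanSpace ℂ (Fin 2) := (WithLp.equiv 2 _).symm ![w * u₀, (v₀:ℂ)] with hy
  have hy0 : y 0 = w * u₀ := rfl
  have hy1 : y 1 = (v₀:ℂ) := rfl
  have hBy0 : matCLM !![0,(a:ℂ);0,0] y 0 = a * y 1 := by
    rw [matCLM_apply]
    simp [Matrix.mulVec, dotProduct, Fin.sum_univ_two]
  have hBy1 : matCLM !![0,(a:ℂ);0,0] y 1 = 0 := by
    rw [matCLM_apply]
    simp [Matrix.mulVec, dotProduct, Fin.sum_univ_two]
  have hwabs : ‖w‖ = 1 := by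
    rw [hw, norm_mul, Complex.norm_conj, phs_abs, phs_abs, one_mul]
  have hynorm : ‖y‖ = 1 := by
    rw [EuclideanSpace.norm_eq]
    have : ∑ i : Fin 2, ‖y i‖^2 = u₀^2 + v₀^2 := by
      rw [Fin.sum_univ_two, hy0, hy1]
      simp [norm_mul, hwabs, Complex.norm_real, Real.norm_eq_abs,
        abs_of_nonneg hu₀0, abs_of_nonneg hv₀0]
    rw [this]
    rw [show u₀^2 + v₀^2 = 1 by nlinarith, Real.sqrt_one]
  set MB := c • (1 : EuclideanSpace ℂ (Fin 2) →L[ℂ] EuclideanSpace ℂ (Fin 2))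
      + d • matCLM !![0,(a:ℂ);0,0] with hMB
  have hMB0 : MB y 0 = phs d * ((‖c‖ * u₀ + ‖d‖ * (a * v₀) : ℝ) : ℂ) := by
    have hMBapp : MB y 0 = c * y 0 + d * (matCLM !![0,(a:ℂ);0,0] y 0) := by
      rw [hMB]
      simp only [ContinuousLinearMap.add_apply, ContinuousLinearMap.smul_apply,
        ContinuousLinearMap.one_apply, PiLp.add_apply, PiLp.smul_apply, smul_eq_mul]
    rw [hMBapp, hy0, hBy0, hy1]
    have e1 : c * (w * u₀) = (‖c‖ : ℂ) * phs d * u₀ := by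
      rw [hw, ← mul_assoc, ← mul_assoc, mul_conj_phs]
    have e2 : d * ((a:ℂ) * (v₀:ℂ)) = (‖d‖ : ℂ) * phs d * ((a:ℂ) * (v₀:ℂ)) := by
      conv_lhs => rw [← abs_mul_phs d]
    rw [e1, e2]
    push_cast
    ring
  have hMB1 : MB y 1 = c * (v₀:ℂ) := by
    have hMBapp : MB y 1 = c * y 1 + d * (matCLM !![0,(a:ℂ);0,0] y 1) := by
      rw [hMB]
      simp only [ContinuousLinearMap.add_apply, ContinuousLinearMap.smul_apply,
        ContinuousLinearMap.one_apply, PiLp.add_apply, PiLp.smul_apply, smul_eq_mul]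
    rw [hMBapp, hy1, hBy1]; ring
  have hR : ‖MB y‖^2
      = ‖c‖^2 + 2 * ‖c‖ * ‖d‖ * u₀ * s + ‖d‖^2 * s^2 := by
    have hnsq : ‖MB y‖^2 = ∑ i : Fin 2, ‖MB y i‖^2 :=
      PiLp.norm_sq_eq_of_L2 _ (MB y)
    rw [hnsq, Fin.sum_univ_two]
    have habs0 : ‖MB y 0‖ = ‖c‖ * u₀ + ‖d‖ * (a * v₀) := by
      rw [hMB0, norm_mul, phs_abs, one_mul, Complex.norm_real, Real.norm_eq_abs]
      have : (0:ℝ) ≤ ‖c‖ * u₀ + ‖d‖ * (a * v₀) := by positivity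
      rw [abs_of_nonneg this]
    have habs1 : ‖MB y 1‖ = ‖c‖ * v₀ := by
      rw [hMB1, norm_mul, Complex.norm_real, Real.norm_eq_abs, abs_of_nonneg hv₀0]
    rw [habs0, habs1, hav₀]
    nlinarith [hu₀sq]
  have hle2 : ‖(c • (1 : EuclideanSpace ℂ (Fin n) →L[ℂ] EuclideanSpace ℂ (Fin n)) + d • T) x‖
      ≤ ‖MB y‖ := by
    have h1 : ‖(c • (1 : EuclideanSpace ℂ (Fin n) →L[ℂ] EuclideanSpace ℂ (Fin n)) + d • T) x‖^2
        ≤ ‖MB y‖^2 := by rw [hR]; exact hL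
    nlinarith [norm_nonneg ((c • (1 : EuclideanSpace ℂ (Fin n) →L[ℂ]
      EuclideanSpace ℂ (Fin n)) + d • T) x), norm_nonneg (MB y)]
  calc _ ≤ ‖MB y‖ := hle2
  _ ≤ ‖MB‖ * ‖y‖ := MB.le_opNorm y
  _ = ‖MB‖ := by rw [hynorm, mul_one]

/-- The numerical range of the canonical nilpotent is contained in that of `A`. -/
lemma numRange_B_subset {n : ℕ} (A : Matrix (Fin n) (Fin n) ℂ) (a : ℝ) (ha : 0 < a)
    (e : EuclideanSpace ℂ (Fin n)) (he : ‖e‖ = 1) (hTe : ‖matCLM A e‖ = a)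
    (hee : ⟪e, matCLM A e⟫ = 0) (hT2 : ∀ y, matCLM A (matCLM A y) = 0) :
    numRange !![0,(a:ℂ);0,0] ⊆ numRange A := by
  set T := matCLM A with hT
  intro z hz
  obtain ⟨y, hy, hzy⟩ := hz
  set g : EuclideanSpace ℂ (Fin n) := (a⁻¹ : ℂ) • T e with hg
  have hga : T e = (a:ℂ) • g := by
    rw [hg, smul_smul]
    rw [mul_inv_cancel₀ (by exact_mod_cast ha.ne')]
    rw [one_smul]
  have hgnorm : ‖g‖ = 1 := by
    rw [hg, norm_smul, hTe]
    simp [Complex.norm_real, abs_of_pos ha, inv_mul_cancel₀ ha.ne']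
  have hTg : T g = 0 := by rw [hg, map_smul, hT2, smul_zero]
  have heg : ⟪e, g⟫ = 0 := by
    rw [hg, inner_smul_right, hee, mul_zero]
  have hge : ⟪g, e⟫ = 0 := by
    rw [← inner_conj_symm, heg, map_zero]
  have hgg : ⟪g, g⟫ = (1:ℂ) := by
    rw [inner_self_eq_norm_sq_to_K, hgnorm]; norm_num
  clear_value g
  clear hg
  have hBy : ⟪y, matCLM !![0,(a:ℂ);0,0] y⟫ = starRingEnd ℂ (y 0) * ((a:ℂ) * y 1) := by
    have h0 : matCLM !![0,(a:ℂ);0,0] y 0 = a * y 1 := by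
      rw [matCLM_apply]; simp [Matrix.mulVec, dotProduct, Fin.sum_univ_two]
    have h1 : matCLM !![0,(a:ℂ);0,0] y 1 = 0 := by
      rw [matCLM_apply]; simp [Matrix.mulVec, dotProduct, Fin.sum_univ_two]
    rw [show (⟪y, matCLM !![0,(a:ℂ);0,0] y⟫ : ℂ)
      = ∑ i : Fin 2, starRingEnd ℂ (y i) * matCLM !![0,(a:ℂ);0,0] y i by rw [PiLp.inner_apply]; simp only [RCLike.inner_apply, mul_comm],
      Fin.sum_univ_two, h0, h1, mul_zero, add_zero]
  set x : EuclideanSpace ℂ (Fin n) := y 1 • e + y 0 • g with hx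
  have hy2 : ‖y 0‖^2 + ‖y 1‖^2 = 1 := by
    have := PiLp.norm_sq_eq_of_L2 _ y
    rw [hy] at this
    simp [Fin.sum_univ_two] at this
    linarith [this]
  have hxnorm : ‖x‖ = 1 := by
    have hx2 : ‖x‖^2 = 1 := by
      rw [hx, @norm_add_sq ℂ]
      rw [inner_smul_left, inner_smul_right, heg]
      simp [norm_smul, he, hgnorm]
      nlinarith [hy2]
    nlinarith [norm_nonneg x]
  have hTx : T x = ((a:ℂ) * y 1) • g := by
    rw [hx, map_add, map_smul, map_smul, hTg, smul_zero, add_zero, hga, smul_smul,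
      mul_comm]
  have hinner : ⟪x, T x⟫ = starRingEnd ℂ (y 0) * ((a:ℂ) * y 1) := by
    rw [hTx, hx, inner_add_left, inner_smul_left, inner_smul_left,
      inner_smul_right, inner_smul_right, heg, hgg]
    ring
  exact ⟨x, hxnorm, by rw [hzy, hBy, ← hinner]⟩

/-- If every `1 × 1` and `2 × 2` matrix satisfies the Crouzeix inequality, then every
`n × n` matrix `A` with `A² = 0` satisfies the Crouzeix inequality. -/
theorem crouzeix_sq_zero (h1 : ∀ B : Matrix (Fin 1) (Fin 1) ℂ, CrouzeixIneq B)
    (h2 : ∀ B : Matrix (Fin 2) (Fin 2) ℂ, CrouzeixIneq B)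
    {n : ℕ} (A : Matrix (Fin n) (Fin n) ℂ) (hA : A ^ 2 = 0) :
    CrouzeixIneq A := by
  intro p
  obtain ⟨hM0, hMle⟩ := sup_facts A p
  set M := ⨆ z ∈ numRange A, ‖Polynomial.eval z p‖ with hM
  set T := matCLM A with hT
  have hT2 : ∀ y, T (T y) = 0 := by
    intro y
    have hAA : matCLM A * matCLM A = 0 := by
      simp only [matCLM]
      rw [← map_mul, ← sq, hA]
      exact map_zero _
    have : (T * T) y = (0 : EuclideanSpace ℂ (Fin n) →L[ℂ] EuclideanSpace ℂ (Fin n)) y := by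
      rw [hT, hAA]
    simpa using this
  set c := p.coeff 0 with hc
  set d := p.coeff 1 with hd
  have hPA : matCLM (Polynomial.aeval A p) = c • 1 + d • T := matCLM_aeval A hA p
  by_cases hTz : T = 0
  · -- the zero operator case
    have hcle : ‖matCLM (Polynomial.aeval A p)‖ ≤ ‖c‖ := by
      rw [hPA]
      refine ContinuousLinearMap.opNorm_le_bound _ (norm_nonneg c) fun x => ?_
      have happ : (c • (1 : EuclideanSpace ℂ (Fin n) →L[ℂ] EuclideanSpace ℂ (Fin n))
          + d • T) x = c • x := by
        rw [hTz]; simp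
      rw [happ, norm_smul]
    rcases Nat.eq_zero_or_pos n with hn | hn
    · subst hn
      have hzero : matCLM (Polynomial.aeval A p) = 0 := by
        ext x i
        exact i.elim0
      rw [hzero, norm_zero]
      linarith
    · have h0mem : (0:ℂ) ∈ numRange A := by
        refine ⟨EuclideanSpace.single ⟨0, hn⟩ 1, ?_, ?_⟩
        · rw [EuclideanSpace.norm_single]; norm_num
        · rw [← hT, hTz]
          simp
      have habs := hMle 0 h0mem
      rw [← Polynomial.coeff_zero_eq_eval_zero, ← hc] at habs
      linarith
  · -- the main case
    set a := ‖T‖ with haT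
    have ha : 0 < a := by
      rw [haT]
      exact norm_pos_iff.mpr hTz
    obtain ⟨e, he, hTe⟩ := exists_max_vec T hTz
    have hee : ⟪e, T e⟫ = 0 :=
      inner_max_vec_eq_zero T hT2 e he a ha (by rw [hTe, haT]) haT.symm
    have hB2 := sq_zero_B a
    have hPB : matCLM (Polynomial.aeval !![0,(a:ℂ);0,0] p)
        = c • 1 + d • matCLM !![0,(a:ℂ);0,0] := matCLM_aeval _ hB2 p
    have key1 : ‖matCLM (Polynomial.aeval A p)‖
        ≤ ‖matCLM (Polynomial.aeval !![0,(a:ℂ);0,0] p)‖ := by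
      rw [hPA, hPB]
      refine ContinuousLinearMap.opNorm_le_bound _ (norm_nonneg _) fun x => ?_
      rcases eq_or_ne x 0 with rfl | hx
      · simp
      · have hxn : (0:ℝ) < ‖x‖ := norm_pos_iff.mpr hx
        have hx1 : ‖(‖x‖⁻¹ • x : EuclideanSpace ℂ (Fin n))‖ = 1 := by
          rw [norm_smul, norm_inv, norm_norm, inv_mul_cancel₀ hxn.ne']
        have := norm_apply_le T hT2 a ha haT.symm c d (‖x‖⁻¹ • x) hx1
        rw [ContinuousLinearMap.map_smul_of_tower, norm_smul, norm_inv, norm_norm] at this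
        calc ‖(c • (1 : EuclideanSpace ℂ (Fin n) →L[ℂ] EuclideanSpace ℂ (Fin n)) + d • T) x‖
            = ‖x‖ * (‖x‖⁻¹ * ‖(c • (1 : EuclideanSpace ℂ (Fin n) →L[ℂ]
              EuclideanSpace ℂ (Fin n)) + d • T) x‖) := by field_simp
        _ ≤ ‖x‖ * ‖c • (1 : EuclideanSpace ℂ (Fin 2) →L[ℂ] EuclideanSpace ℂ (Fin 2))
              + d • matCLM !![0,(a:ℂ);0,0]‖ := by gcongr
        _ = _ := mul_comm _ _
    have key2 := h2 !![0,(a:ℂ);0,0] p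
    have hBsub : numRange !![0,(a:ℂ);0,0] ⊆ numRange A :=
      numRange_B_subset A a ha e he (by rw [← hT, hTe, haT]) (by rw [← hT]; exact hee)
        (by rw [← hT]; exact hT2)
    have key3 : (⨆ z ∈ numRange !![0,(a:ℂ);0,0], ‖Polynomial.eval z p‖) ≤ M := by
      refine Real.iSup_le (fun z => Real.iSup_le (fun hz => hMle z (hBsub hz)) hM0) hM0
    calc ‖matCLM (Polynomial.aeval A p)‖ ≤ ‖matCLM (Polynomial.aeval !![0,(a:ℂ);0,0] p)‖ := key1
    _ ≤ 2 * ⨆ z ∈ numRange !![0,(a:ℂ);0,0], ‖Polynomial.eval z p‖ := key2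
    _ ≤ 2 * M := by linarith
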